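/- Let f, f₁ : ℂ → ℂ be entire functions with no common zeros and with f₁ not identically zero. Then there exist entire functions g and h such that g(z) = 0 if and only if f₁(z) = 0 for every z ∈ ℂ, and f·g = f₁·(1 + g·h) identically on ℂ (equivalently, 1/g has the same principal parts as the meromorphic function f/f₁, i.e. f/f₁ − 1/g extends to the entire function h). -/

import Mathlib

open Complex Filter Metric
open scoped ENNReal NNReal

noncomputable section

namespace Stmt9Aux


/-- Globalization: if entire `F` is locally `(z-a)^m * r z` near `a` with `r` analytic at `a`,
then there is an entire `R` with `F = (·-a)^m * R` globally and `R a = r a`. -/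
lemma globalize {F r : ℂ → ℂ} {a : ℂ} {m : ℕ} (hF : Differentiable ℂ F)
    (hr : AnalyticAt ℂ r a) (hev : ∀ᶠ z in nhds a, F z = (z - a) ^ m * r z) :
    ∃ R : ℂ → ℂ, Differentiable ℂ R ∧ (∀ z, F z = (z - a) ^ m * R z) ∧ R a = r a := by
  classical
  refine ⟨fun z => if z = a then r a else F z / (z - a) ^ m, ?_, ?_, by simp⟩
  · have hloc : (fun z => if z = a then r a else F z / (z - a) ^ m) =ᶠ[nhds a] r := by
      filter_upwards [hev] with z hz
      by_cases h : z = a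
      · simp [h]
      · simp only [if_neg h]
        rw [hz]
        field_simp [sub_ne_zero.mpr h]
    intro z
    by_cases hz : z = a
    · subst hz
      exact (hr.differentiableAt.congr_of_eventuallyEq hloc)
    · have hne : ∀ᶠ y in nhds z, y ≠ a := eventually_ne_nhds hz
      have : (fun y => if y = a then r a else F y / (y - a) ^ m) =ᶠ[nhds z]
          (fun y => F y / (y - a) ^ m) := by
        filter_upwards [hne] with y hy; simp [hy]
      refine DifferentiableAt.congr_of_eventuallyEq ?_ this
      exact (hF z).div (by fun_prop) (pow_ne_zero _ (sub_ne_zero.mpr hz))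
  · intro z
    by_cases hz : z = a
    · subst hz
      rcases m.eq_zero_or_pos with hm | hm
      · simpa [hm] using hev.self_of_nhds
      · have : F z = 0 := by simpa [hm.ne', sub_self] using hev.self_of_nhds
        simp [this, hm.ne']
    · simp only [if_neg hz]
      field_simp [sub_ne_zero.mpr hz]

/-- Truncation: an analytic germ can be approximated to any order by an entire function. -/
lemma trunc {q : ℂ → ℂ} {a : ℂ} (hq : AnalyticAt ℂ q a) (m : ℕ) :
    ∃ P r : ℂ → ℂ, Differentiable ℂ P ∧ AnalyticAt ℂ r a ∧
      ∀ᶠ z in nhds a, q z - P z = (z - a) ^ m * r z := by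
  induction m with
  | zero => exact ⟨fun _ => 0, q, by fun_prop, hq, by simp⟩
  | succ m ih =>
    obtain ⟨P, r, hP, hr, hev⟩ := ih
    refine ⟨fun z => P z + r a * (z - a) ^ m, dslope r a, by fun_prop, ?_, ?_⟩
    · obtain ⟨p, hp⟩ := hr
      exact ⟨p.fslope, hp.has_fpower_series_dslope_fslope⟩
    · filter_upwards [hev] with z hz
      have hds : r z - r a = (z - a) * dslope r a z := by
        by_cases h : z = a
        · simp [h]
        · rw [dslope_of_ne r h, slope_def_field]
          field_simp [sub_ne_zero.mpr h]
      have : q z - (P z + r a * (z - a) ^ m) = (z - a) ^ m * (r z - r a) := by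
        rw [show q z - (P z + r a * (z - a) ^ m) = (q z - P z) - r a * (z-a)^m by ring, hz]; ring
      rw [this, hds]; ring



/-- order factorization at a zero of a not-identically-zero entire function. -/
lemma pkg {f₁ : ℂ → ℂ} (hf₁ : Differentiable ℂ f₁) (hf₁0 : ∃ z, f₁ z ≠ 0) {a : ℂ}
    (ha : f₁ a = 0) :
    ∃ (m : ℕ) (u : ℂ → ℂ), 0 < m ∧ Differentiable ℂ u ∧ u a ≠ 0 ∧
      ∀ z, f₁ z = (z - a) ^ m * u z := by
  have hA : AnalyticAt ℂ f₁ a := hf₁.analyticAt a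
  have hord : analyticOrderAt f₁ a ≠ ⊤ := by
    intro htop
    have hev : ∀ᶠ z in nhds a, f₁ z = 0 := analyticOrderAt_eq_top.mp htop
    obtain ⟨z₀, hz₀⟩ := hf₁0
    have : Set.EqOn f₁ 0 Set.univ :=
      AnalyticOnNhd.eqOn_zero_of_preconnected_of_eventuallyEq_zero
        (fun z _ => hf₁.analyticAt z) isPreconnected_univ (Set.mem_univ a) hev
    exact hz₀ (this (Set.mem_univ z₀))
  obtain ⟨m, hm⟩ := WithTop.ne_top_iff_exists.mp hord
  obtain ⟨g, hg, hga, hev⟩ := (hA.analyticOrderAt_eq_natCast (n := m)).mp hm.symm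
  have hm0 : 0 < m := by
    rcases Nat.eq_zero_or_pos m with h0 | h
    · exfalso
      have := hev.self_of_nhds
      rw [h0] at this
      simp only [pow_zero, one_smul] at this
      exact hga (this ▸ ha)
    · exact h
  have hev' : ∀ᶠ z in nhds a, f₁ z = (z - a) ^ m * g z := by
    filter_upwards [hev] with z hz; simpa [smul_eq_mul] using hz
  obtain ⟨u, hu, huid, hua⟩ := globalize hf₁ hg hev'
  exact ⟨m, u, hm0, hu, hua ▸ hga, huid⟩

/-- isolation of zeros -/
lemma iso {f₁ : ℂ → ℂ} (hf₁ : Differentiable ℂ f₁) (hf₁0 : ∃ z, f₁ z ≠ 0) {a : ℂ}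
    (ha : f₁ a = 0) :
    ∃ δ > 0, ∀ z ∈ closedBall a δ, z ≠ a → f₁ z ≠ 0 := by
  obtain ⟨m, u, hm, hu, hua, hid⟩ := pkg hf₁ hf₁0 ha
  have : ∀ᶠ z in nhds a, u z ≠ 0 := (hu.continuous.continuousAt).eventually_ne hua
  obtain ⟨ε, hε, hball⟩ := Metric.eventually_nhds_iff.mp this
  refine ⟨ε/2, by positivity, fun z hz hza => ?_⟩
  have : u z ≠ 0 := hball (lt_of_le_of_lt (mem_closedBall.mp hz) (by linarith))
  rw [hid z]
  exact mul_ne_zero (pow_ne_zero _ (sub_ne_zero.mpr hza)) this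

/-- local logarithm germ -/
lemma log_germ {f : ℂ → ℂ} (hf : Differentiable ℂ f) {a : ℂ} (ha : f a ≠ 0) :
    ∃ v : ℂ → ℂ, AnalyticAt ℂ v a ∧ ∀ᶠ z in nhds a, Complex.exp (v z) = f z := by
  refine ⟨fun z => Complex.log (f z / f a) + Complex.log (f a), ?_, ?_⟩
  · apply AnalyticAt.add _ analyticAt_const
    have h1 : AnalyticAt ℂ (fun z => f z / f a) a := (hf.analyticAt a).div analyticAt_const ha
    apply (analyticAt_clog ?_).comp h1
    simp [div_self ha, Complex.slitPlane]
  · have : ∀ᶠ z in nhds a, f z ≠ 0 := (hf.continuous.continuousAt).eventually_ne ha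
    filter_upwards [this] with z hz
    rw [Complex.exp_add, Complex.exp_log (div_ne_zero hz ha), Complex.exp_log ha]
    field_simp

/-- zeros in a closed ball are finite -/
lemma finK {f₁ : ℂ → ℂ} (hf₁ : Differentiable ℂ f₁) (hf₁0 : ∃ z, f₁ z ≠ 0) (K : ℝ) :
    ({z | f₁ z = 0} ∩ closedBall 0 K).Finite := by
  by_contra hinf
  have hinf' : ({z | f₁ z = 0} ∩ closedBall 0 K).Infinite := hinf
  obtain ⟨x, hxK, hacc⟩ := hinf'.exists_accPt_of_subset_isCompact
    (isCompact_closedBall (0:ℂ) K) Set.inter_subset_right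
  have hfreq : ∃ᶠ y in nhds x, y ≠ x ∧ f₁ y = 0 := by
    have := accPt_iff_frequently.mp hacc
    exact this.mono fun y hy => ⟨hy.1, hy.2.1⟩
  have hxS : f₁ x = 0 := by
    by_contra hx0
    have : ∀ᶠ y in nhds x, f₁ y ≠ 0 := hf₁.continuous.continuousAt.eventually_ne hx0
    obtain ⟨y, hy1, hy2⟩ := (hfreq.and_eventually this).exists
    exact hy2 hy1.2
  obtain ⟨δ, hδ, hball⟩ := iso hf₁ hf₁0 hxS
  have hev : ∀ᶠ y in nhds x, y ∈ closedBall x δ :=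
    Metric.eventually_nhds_iff.mpr ⟨δ, hδ, fun {z} hz => mem_closedBall.mpr hz.le⟩
  obtain ⟨y, ⟨hyx, hyS⟩, hyb⟩ := (hfreq.and_eventually hev).exists
  exact hball y hyb hyx hyS

/-- the function E with exp x - 1 = x * E x -/
noncomputable def Efun : ℂ → ℂ := dslope Complex.exp 0

lemma Efun_id (x : ℂ) : Complex.exp x - 1 = x * Efun x := by
  by_cases h : x = 0
  · simp [h]
  · rw [Efun, dslope_of_ne _ h, slope_def_field]
    field_simp
    rw [sub_zero, Complex.exp_zero]; ring

lemma Efun_analytic (x : ℂ) : AnalyticAt ℂ Efun x := by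
  by_cases h : x = 0
  · subst h
    obtain ⟨p, hp⟩ := (Complex.differentiable_exp.analyticAt 0)
    exact ⟨p.fslope, hp.has_fpower_series_dslope_fslope⟩
  · have hev : Efun =ᶠ[nhds x] (fun z => (Complex.exp z - 1) / z) := by
      filter_upwards [eventually_ne_nhds h] with z hz
      rw [Efun, dslope_of_ne _ hz, slope_def_field]
      simp
    apply AnalyticAt.congr _ hev.symm
    exact AnalyticAt.div
      (((Complex.differentiable_exp.analyticAt x)).sub analyticAt_const) analyticAt_id h

/-- partial sums of 1-dim formal multilinear series are entire -/
lemma partialSum_differentiable (p : FormalMultilinearSeries ℂ ℂ ℂ) (N : ℕ) :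
    Differentiable ℂ (fun z => p.partialSum N z) := by
  have hrep : ∀ z : ℂ, p.partialSum N z
      = ∑ k ∈ Finset.range N, z ^ k * (p k fun _ => (1:ℂ)) := by
    intro z
    unfold FormalMultilinearSeries.partialSum
    refine Finset.sum_congr rfl fun k _ => ?_
    have h1 := ContinuousMultilinearMap.map_smul_univ (p k) (fun _ : Fin k => z)
      (fun _ : Fin k => (1:ℂ))
    simp only [smul_eq_mul, mul_one, Finset.prod_const, Finset.card_univ,
      Fintype.card_fin] at h1
    exact h1
  have h2 : Differentiable ℂ (fun z => ∑ k ∈ Finset.range N, z ^ k * (p k fun _ => (1:ℂ))) := by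
    apply Differentiable.fun_sum
    intro k _
    exact (differentiable_pow k).mul (differentiable_const _)
  intro x
  exact (h2 x).congr_of_eventuallyEq (Eventually.of_forall fun z => hrep z)

/-- The key per-zero term construction. -/
lemma term {f f₁ : ℂ → ℂ} (hf : Differentiable ℂ f) (hf₁ : Differentiable ℂ f₁)
    (hf₁0 : ∃ z, f₁ z ≠ 0) {a : ℂ} (ha : f₁ a = 0) (hfa : f a ≠ 0) {ε : ℝ} (hε : 0 < ε) :
    ∃ t R T v : ℂ → ℂ,
      Differentiable ℂ t ∧
      DifferentiableOn ℂ (fun z => R z - T z) {a}ᶜ ∧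
      AnalyticAt ℂ v a ∧ (∀ᶠ z in nhds a, Complex.exp (v z) = f z) ∧
      (∃ r, AnalyticAt ℂ r a ∧ ∀ᶠ z in nhds a, t z - v z = f₁ z * r z) ∧
      (∀ z, z ≠ a → t z = f₁ z * (R z - T z)) ∧
      (a ≠ 0 → ∀ z ∈ closedBall (0:ℂ) (‖a‖ / 2), ‖R z - T z‖ ≤ ε) := by
  classical
  obtain ⟨m, u, hm, hu, hua, hid⟩ := pkg hf₁ hf₁0 ha
  obtain ⟨v, hv, hve⟩ := log_germ hf hfa
  have hq : AnalyticAt ℂ (fun z => v z / u z) a := hv.div (hu.analyticAt a) hua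
  obtain ⟨P, rP, hP, hrP, hPev⟩ := trunc hq m
  set R : ℂ → ℂ := fun z => P z / (z - a) ^ m with hR
  have hRd : DifferentiableOn ℂ R {a}ᶜ := by
    intro z hz
    exact ((hP z).div (((differentiable_id.sub_const a).pow m) z)
      (pow_ne_zero _ (sub_ne_zero.mpr hz))).differentiableWithinAt
  -- choose T
  obtain ⟨T, hT, hTsmall⟩ : ∃ T : ℂ → ℂ, Differentiable ℂ T ∧
      (a ≠ 0 → ∀ z ∈ closedBall (0:ℂ) (‖a‖ / 2), ‖R z - T z‖ ≤ ε) := by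
    by_cases ha0 : a = 0
    · exact ⟨fun _ => 0, by fun_prop, fun h => absurd ha0 h⟩
    · have habs : 0 < ‖a‖ := by simpa using ha0
      set ρ : NNReal := ⟨3/4 * ‖a‖, by positivity⟩ with hρ
      have hρ0 : (0:ℝ≥0) < ρ := by
        rw [← NNReal.coe_lt_coe]
        show (0:ℝ) < 3/4 * ‖a‖
        positivity
      have hsub : closedBall (0:ℂ) (ρ:ℝ) ⊆ {a}ᶜ := by
        intro z hz
        simp only [Set.mem_compl_iff, Set.mem_singleton_iff]
        intro hza
        subst hza
        have : ‖z‖ ≤ 3/4 * ‖z‖ := by exact mem_closedBall_zero_iff.mp hz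
        nlinarith
      have hball := (hRd.mono hsub).hasFPowerSeriesOnBall hρ0
      set r' : NNReal := ⟨5/8 * ‖a‖, by positivity⟩ with hr'
      have hlt : (r' : ℝ≥0∞) < (ρ : ℝ≥0∞) := by
        rw [ENNReal.coe_lt_coe, ← NNReal.coe_lt_coe]
        show (5/8 : ℝ) * ‖a‖ < 3/4 * ‖a‖
        nlinarith
      have hTU := hball.tendstoUniformlyOn hlt
      rw [Metric.tendstoUniformlyOn_iff] at hTU
      obtain ⟨N, hN⟩ := (hTU ε hε).exists
      refine ⟨fun z => (cauchyPowerSeries R 0 ρ).partialSum N z,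
        partialSum_differentiable _ _, fun _ z hz => ?_⟩
      have hzball : z ∈ ball (0:ℂ) (r' : ℝ) := by
        rw [mem_ball_zero_iff]
        have : ‖z‖ ≤ ‖a‖ / 2 := mem_closedBall_zero_iff.mp hz
        calc ‖z‖ ≤ ‖a‖ / 2 := this
          _ < 5/8 * ‖a‖ := by nlinarith
      have h3 := hN z hzball
      rw [dist_eq_norm] at h3
      simpa using h3.le
  -- assemble
  refine ⟨fun z => u z * P z - f₁ z * T z, R, T, v, by fun_prop, hRd.sub hT.differentiableOn,
    hv, hve, ?_, ?_, hTsmall⟩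
  · refine ⟨fun z => -rP z - T z, (hrP.neg).sub ((hT.analyticAt a)), ?_⟩
    have huev : ∀ᶠ z in nhds a, u z ≠ 0 := hu.continuous.continuousAt.eventually_ne hua
    filter_upwards [hPev, huev] with z hz hz2
    have hvq : u z * (v z / u z) = v z := by field_simp
    calc u z * P z - f₁ z * T z - v z
        = u z * P z - f₁ z * T z - u z * (v z / u z) := by rw [hvq]
      _ = -(u z * (v z / u z - P z)) - f₁ z * T z := by ring
      _ = -(u z * ((z - a) ^ m * rP z)) - f₁ z * T z := by rw [hz]
      _ = f₁ z * (-rP z - T z) := by rw [hid z]; ring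
  · intro z hz
    have hne : (z - a) ^ m ≠ 0 := pow_ne_zero _ (sub_ne_zero.mpr hz)
    have hUP : u z * P z = f₁ z * R z := by
      rw [hid z, hR]
      field_simp
    rw [mul_sub, ← hUP]


/-- Glue: if entire F is locally divisible by f₁ at each zero of f₁, it is globally divisible. -/
lemma glue {f₁ F : ℂ → ℂ} (hf₁ : Differentiable ℂ f₁) (hf₁0 : ∃ z, f₁ z ≠ 0)
    (hF : Differentiable ℂ F)
    (hloc : ∀ a, f₁ a = 0 → ∃ r, AnalyticAt ℂ r a ∧ ∀ᶠ z in nhds a, F z = f₁ z * r z) :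
    ∃ h : ℂ → ℂ, Differentiable ℂ h ∧ ∀ z, F z = f₁ z * h z := by
  classical
  set h : ℂ → ℂ := fun z => if hz : f₁ z = 0 then Classical.choose (hloc z hz) z
    else F z / f₁ z with hh
  have key : ∀ a (ha : f₁ a = 0), h =ᶠ[nhds a] Classical.choose (hloc a ha) := by
    intro a ha
    obtain ⟨hr, hev⟩ := Classical.choose_spec (hloc a ha)
    obtain ⟨δ, hδ, hball⟩ := iso hf₁ hf₁0 ha
    have hev2 : ∀ᶠ z in nhds a, z ∈ closedBall a δ :=
      Metric.eventually_nhds_iff.mpr ⟨δ, hδ, fun {z} hz => mem_closedBall.mpr hz.le⟩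
    filter_upwards [hev, hev2] with z h1 h2
    by_cases hz : z = a
    · subst hz; simp [hh, ha]
    · have hne : f₁ z ≠ 0 := hball z h2 hz
      simp only [hh, dif_neg hne]
      rw [h1]; field_simp
  refine ⟨h, ?_, ?_⟩
  · intro z
    by_cases hz : f₁ z = 0
    · obtain ⟨hr, _⟩ := Classical.choose_spec (hloc z hz)
      exact hr.differentiableAt.congr_of_eventuallyEq (key z hz)
    · have hne : ∀ᶠ y in nhds z, f₁ y ≠ 0 := hf₁.continuous.continuousAt.eventually_ne hz
      have : h =ᶠ[nhds z] fun y => F y / f₁ y := by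
        filter_upwards [hne] with y hy; simp [hh, dif_neg hy]
      exact ((hF z).div (hf₁ z) hz).congr_of_eventuallyEq this
  · intro z
    by_cases hz : f₁ z = 0
    · obtain ⟨hr, hev⟩ := Classical.choose_spec (hloc z hz)
      rw [hz, zero_mul]
      simpa [hz] using hev.self_of_nhds
    · simp only [hh, dif_neg hz]; field_simp


end Stmt9Aux


open Stmt9Aux

/-- for entire f, f₁ with no common zeros and f₁ not identically
zero, there are entire g, h with g vanishing exactly where f₁ does and
f·g = f₁·(1 + g·h), i.e. 1/g has the same principal parts as f/f₁. -/
theorem stmt9 (f f₁ : ℂ → ℂ) (hf : Differentiable ℂ f) (hf₁ : Differentiable ℂ f₁)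
    (hff₁ : ∀ z : ℂ, ¬(f z = 0 ∧ f₁ z = 0)) (hf₁0 : ∃ z : ℂ, f₁ z ≠ 0) :
    ∃ g h : ℂ → ℂ,
      Differentiable ℂ g ∧ Differentiable ℂ h ∧
      (∀ z : ℂ, g z = 0 ↔ f₁ z = 0) ∧
      ∀ z : ℂ, f z * g z = f₁ z * (1 + g z * h z) := by
  classical
  set S : Set ℂ := {z | f₁ z = 0} with hSdef
  have hSfin : ∀ K : ℝ, (S ∩ closedBall 0 K).Finite := finK hf₁ hf₁0
  have hScount : S.Countable := by
    have hU : S = ⋃ n : ℕ, S ∩ closedBall 0 n := by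
      ext z
      simp only [Set.mem_iUnion, Set.mem_inter_iff, mem_closedBall_zero_iff]
      constructor
      · intro hz
        obtain ⟨n, hn⟩ := exists_nat_ge ‖z‖
        exact ⟨n, hz, hn⟩
      · rintro ⟨n, hn, _⟩; exact hn
    rw [hU]
    exact Set.countable_iUnion fun n => (hSfin n).countable
  have : Countable ↥S := hScount.to_subtype
  obtain ⟨ν, hν⟩ := exists_injective_nat ↥S
  have hgeo : Summable (fun i : ↥S => ((1:ℝ)/2) ^ (ν i)) :=
    summable_geometric_two.comp_injective hν
  have hfar : ∀ B : ℝ, {i : ↥S | ¬ (B ≤ ‖(↑i : ℂ)‖)}.Finite := by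
    intro B
    have h1 : ((fun i : ↥S => (i : ℂ)) ⁻¹' (S ∩ closedBall 0 B)).Finite :=
      Set.Finite.preimage (Subtype.val_injective.injOn) (hSfin B)
    refine h1.subset fun i hi => ?_
    simp only [Set.mem_preimage, Set.mem_inter_iff, mem_closedBall_zero_iff]
    exact ⟨i.2, (not_le.mp hi).le⟩
  -- per-point data
  have hterm : ∀ i : ↥S, ∃ t R T v : ℂ → ℂ,
      Differentiable ℂ t ∧
      DifferentiableOn ℂ (fun z => R z - T z) {(↑i : ℂ)}ᶜ ∧
      AnalyticAt ℂ v ↑i ∧ (∀ᶠ z in nhds (↑i : ℂ), Complex.exp (v z) = f z) ∧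
      (∃ r, AnalyticAt ℂ r ↑i ∧ ∀ᶠ z in nhds (↑i : ℂ), t z - v z = f₁ z * r z) ∧
      (∀ z, z ≠ ↑i → t z = f₁ z * (R z - T z)) ∧
      ((↑i : ℂ) ≠ 0 → ∀ z ∈ closedBall (0:ℂ) (‖(↑i : ℂ)‖ / 2), ‖R z - T z‖ ≤ ((1:ℝ)/2) ^ (ν i)) := by
    intro i
    have hfi : f ↑i ≠ 0 := fun h0 => hff₁ ↑i ⟨h0, i.2⟩
    exact term hf hf₁ hf₁0 i.2 hfi (by positivity)
  choose t R T v ht hRT hv hve hLD hoff hsmall using hterm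
  -- cofinite bound on closed balls
  have hcof : ∀ K : ℝ, 0 ≤ K → ∃ C : ℝ, 0 ≤ C ∧
      ∀ᶠ i : ↥S in cofinite, ∀ z ∈ closedBall (0:ℂ) K,
        ‖t i z‖ ≤ C * ((1:ℝ)/2) ^ (ν i) := by
    intro K hK
    obtain ⟨C, hC⟩ := (isCompact_closedBall (0:ℂ) K).exists_bound_of_continuousOn
      hf₁.continuous.continuousOn
    have hC0 : 0 ≤ C := le_trans (norm_nonneg _) (hC 0 (mem_closedBall_self hK))
    refine ⟨C, hC0, ?_⟩
    have hfin := hfar (2*K + 1)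
    rw [eventually_cofinite]
    refine hfin.subset fun i hi => ?_
    simp only [Set.mem_setOf_eq] at hi ⊢
    intro hbig
    apply hi
    intro z hz
    have hzn : ‖z‖ ≤ K := mem_closedBall_zero_iff.mp hz
    have hzn' : ‖z‖ ≤ K := hzn
    have hane : (↑i : ℂ) ≠ 0 := by
      intro h0
      rw [h0] at hbig
      simp only [norm_zero] at hbig
      linarith
    have hzi : z ≠ ↑i := by
      intro hzi
      rw [← hzi] at hbig
      linarith
    have hzsmall : z ∈ closedBall (0:ℂ) (‖(↑i : ℂ)‖ / 2) := by
      rw [mem_closedBall_zero_iff]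
      show ‖z‖ ≤ ‖(↑i : ℂ)‖ / 2
      linarith
    have hb := hsmall i hane z hzsmall
    rw [hoff i z hzi, norm_mul]
    exact mul_le_mul (hC z hz) hb (norm_nonneg _) hC0
  set w : ℂ → ℂ := fun z => ∑' i : ↥S, t i z with hwdef
  -- differentiability of w
  have hw : Differentiable ℂ w := by
    intro z₀
    set K : ℝ := ‖z₀‖ + 1 with hKdef
    have hK0 : (0:ℝ) ≤ K := by positivity
    obtain ⟨C, hC0, hCb⟩ := hcof K hK0
    have hTU : TendstoUniformlyOn (fun (s : Finset ↥S) z => ∑ i ∈ s, t i z) w atTop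
        (closedBall (0:ℂ) K) := by
      apply tendstoUniformlyOn_tsum_of_cofinite_eventually (hgeo.mul_left C)
      filter_upwards [hCb] with i hi z hz
      exact hi z hz
    have hTLU := (hTU.mono ball_subset_closedBall).tendstoLocallyUniformlyOn
    have hdiff : DifferentiableOn ℂ w (ball (0:ℂ) K) := by
      apply hTLU.differentiableOn _ isOpen_ball
      · filter_upwards with s
        exact (Differentiable.fun_sum (fun i _ => ht i)).differentiableOn
    refine hdiff.differentiableAt (isOpen_ball.mem_nhds ?_)
    rw [mem_ball_zero_iff, hKdef]
    linarith [norm_nonneg z₀]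
  -- pointwise summability
  have hsum : ∀ z : ℂ, Summable (fun i : ↥S => t i z) := by
    intro z
    obtain ⟨C, hC0, hCb⟩ := hcof ‖z‖ (norm_nonneg z)
    apply Summable.of_norm_bounded_eventually (hgeo.mul_left C)
    filter_upwards [hCb] with i hi
    exact hi z (mem_closedBall_zero_iff.mpr le_rfl)
  -- per-point jets
  have hjet : ∀ n : ↥S, ∃ r, AnalyticAt ℂ r ↑n ∧
      ∀ᶠ z in nhds (↑n : ℂ), w z - v n z = f₁ z * r z := by
    intro n
    obtain ⟨δ, hδ, hiso⟩ := iso hf₁ hf₁0 n.2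
    set G : ℂ → ℂ := fun z => ∑' i : ↥S, (if i = n then 0 else (R i z - T i z)) with hGdef
    have hball_sub : ball (↑n : ℂ) δ ⊆ closedBall (↑n : ℂ) δ := ball_subset_closedBall
    have hiball : ∀ i : ↥S, i ≠ n → (↑i : ℂ) ∉ ball (↑n : ℂ) δ := by
      intro i hin hmem
      have hne : (↑i : ℂ) ≠ ↑n := fun hc => hin (Subtype.ext hc)
      exact hiso ↑i (hball_sub hmem) hne i.2
    have hGcof : ∀ᶠ i : ↥S in cofinite, ∀ z ∈ ball (↑n : ℂ) δ,
        ‖(if i = n then 0 else (R i z - T i z))‖ ≤ ((1:ℝ)/2) ^ (ν i) := by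
      have hfin := hfar (2*(‖(↑n : ℂ)‖ + δ) + 1)
      rw [eventually_cofinite]
      refine hfin.subset fun i hi => ?_
      simp only [Set.mem_setOf_eq] at hi ⊢
      intro hbig
      apply hi
      intro z hz
      by_cases hin : i = n
      · simp only [hin, if_pos]
        simp only [norm_zero]
        positivity
      · have habsn : (0:ℝ) ≤ ‖(↑n : ℂ)‖ := norm_nonneg _
        have hane : (↑i : ℂ) ≠ 0 := by
          intro h0
          rw [h0] at hbig
          simp only [norm_zero] at hbig
          linarith
        have hzn : ‖z‖ ≤ ‖(↑n : ℂ)‖ + δ := by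
          have h1 : dist z ↑n < δ := mem_ball.mp hz
          have h2 : ‖(z - ↑n)‖ < δ := by
            rwa [dist_eq_norm] at h1
          have h3 : ‖z‖ - ‖(↑n : ℂ)‖ ≤ ‖z - ↑n‖ := norm_sub_norm_le z ↑n
          have h4 : ‖z‖ = ‖z‖ := rfl
          have h5 : ‖(↑n : ℂ)‖ = ‖(↑n : ℂ)‖ := rfl
          have h6 : ‖(z - ↑n)‖ = ‖z - ↑n‖ := rfl
          rw [h4, h5]
          rw [h6] at h2
          linarith
        have hzsmall : z ∈ closedBall (0:ℂ) (‖(↑i : ℂ)‖ / 2) := by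
          rw [mem_closedBall_zero_iff]
          show ‖z‖ ≤ ‖(↑i : ℂ)‖ / 2
          linarith
        have hb := hsmall i hane z hzsmall
        simpa [hin] using hb
    have hGTU : TendstoUniformlyOn
        (fun (s : Finset ↥S) z => ∑ i ∈ s, (if i = n then 0 else (R i z - T i z))) G atTop
        (ball (↑n : ℂ) δ) :=
      tendstoUniformlyOn_tsum_of_cofinite_eventually hgeo hGcof
    have hGd : DifferentiableOn ℂ G (ball (↑n : ℂ) δ) := by
      apply hGTU.tendstoLocallyUniformlyOn.differentiableOn _ isOpen_ball
      filter_upwards with s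
      apply DifferentiableOn.fun_sum
      intro i _
      by_cases hin : i = n
      · simp only [hin, if_pos]
        exact differentiableOn_const 0
      · simp only [if_neg hin]
        exact (hRT i).mono (fun z hz => fun hc => hiball i hin (hc ▸ hz))
    have hGa : AnalyticAt ℂ G ↑n :=
      hGd.analyticAt (isOpen_ball.mem_nhds (mem_ball_self hδ))
    have hident : ∀ z ∈ ball (↑n : ℂ) δ, w z = t n z + f₁ z * G z := by
      intro z hz
      by_cases hza : z = ↑n
      · have hf₁z : f₁ z = 0 := by rw [hza]; exact n.2
        have hzero : ∀ i : ↥S, i ≠ n → t i z = 0 := by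
          intro i hin
          have hne : z ≠ ↑i := by
            rw [hza]
            intro hc
            exact hiball i hin (hc ▸ mem_ball_self hδ)
          rw [hoff i z hne, hf₁z, zero_mul]
        have h1 : w z = t n z := by
          show (∑' i : ↥S, t i z) = t n z
          exact tsum_eq_single n hzero
        rw [h1, hf₁z]; ring
      · have hfz : f₁ z ≠ 0 := hiso z (hball_sub hz) hza
        have hz_ne : ∀ i : ↥S, z ≠ ↑i := by
          intro i hzi
          exact hfz (by rw [hzi]; exact i.2)
        have h1 : w z = t n z + ∑' i : ↥S, (if i = n then 0 else t i z) :=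
          (hsum z).tsum_eq_add_tsum_ite n
        have h2 : f₁ z * G z = ∑' i : ↥S, f₁ z * (if i = n then 0 else (R i z - T i z)) := by
          rw [hGdef]
          exact (tsum_mul_left).symm
        have h3 : ∀ i : ↥S, f₁ z * (if i = n then 0 else (R i z - T i z))
            = (if i = n then 0 else t i z) := by
          intro i
          by_cases hin : i = n
          · simp [hin]
          · simp only [if_neg hin]
            exact (hoff i z (hz_ne i)).symm
        rw [h1, h2, tsum_congr h3]
    obtain ⟨r₀, hr₀, hr₀ev⟩ := hLD n
    refine ⟨fun z => r₀ z + G z, hr₀.add hGa, ?_⟩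
    have hballev : ∀ᶠ z in nhds (↑n : ℂ), z ∈ ball (↑n : ℂ) δ :=
      isOpen_ball.eventually_mem (mem_ball_self hδ)
    filter_upwards [hr₀ev, hballev] with z h1 h2
    rw [hident z h2]
    calc t n z + f₁ z * G z - v n z = (t n z - v n z) + f₁ z * G z := by ring
      _ = f₁ z * r₀ z + f₁ z * G z := by rw [h1]
      _ = f₁ z * (r₀ z + G z) := by ring
  -- exp step
  have hwexp : Differentiable ℂ (fun z => Complex.exp (w z)) :=
    Complex.differentiable_exp.comp hw
  have hFd : Differentiable ℂ (fun z => f z - Complex.exp (w z)) := hf.sub hwexp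
  have hFdiv : ∀ a, f₁ a = 0 → ∃ r, AnalyticAt ℂ r a ∧
      ∀ᶠ z in nhds a, f z - Complex.exp (w z) = f₁ z * r z := by
    intro a ha
    set n : ↥S := ⟨a, ha⟩ with hn
    obtain ⟨r, hr, hrev⟩ := hjet n
    refine ⟨fun z => -(Complex.exp (v n z) * Efun (w z - v n z) * r z), ?_, ?_⟩
    · apply AnalyticAt.neg
      apply AnalyticAt.mul
      apply AnalyticAt.mul
      · exact (Complex.differentiable_exp.analyticAt _).comp (hv n)
      · exact (Efun_analytic _).comp (((hw.analyticAt a)).sub (hv n))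
      · exact hr
    · filter_upwards [hrev, hve n] with z h1 h2
      have hE := Efun_id (w z - v n z)
      have hexp : Complex.exp (w z) = Complex.exp (v n z) * Complex.exp (w z - v n z) := by
        rw [← Complex.exp_add]; ring_nf
      have hEE : Complex.exp (w z - v n z) = 1 + (w z - v n z) * Efun (w z - v n z) := by
        linear_combination hE
      rw [← h2, hexp, hEE, h1]
      ring
  obtain ⟨h, hh, hhid⟩ := glue hf₁ hf₁0 hFd hFdiv
  refine ⟨fun z => f₁ z * Complex.exp (-(w z)), h, ?_, hh, ?_, ?_⟩
  · exact hf₁.mul (Complex.differentiable_exp.comp hw.neg)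
  · intro z
    constructor
    · intro h0
      rcases mul_eq_zero.mp h0 with h0 | h0
      · exact h0
      · exact absurd h0 (Complex.exp_ne_zero _)
    · intro h0
      show f₁ z * Complex.exp (-(w z)) = 0
      rw [h0, zero_mul]
  · intro z
    have key : f z - Complex.exp (w z) = f₁ z * h z := hhid z
    have hinv : Complex.exp (-(w z)) * Complex.exp (w z) = 1 := by
      rw [← Complex.exp_add]; simp
    linear_combination (f₁ z * Complex.exp (-(w z))) * key + f₁ z * hinv
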